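/- A complex symmetric 2×2 matrix z satisfies Q(z) = 1 and H(z) = 1 if and only if all entries of z are real and det z = 1. In other words, M_{1,1} equals the set {x ∈ S₂(ℝ) : det x = 1}, the real unit hyperboloid of two sheets. -/

import Mathlib

lemma aux_real (a b c p q r : ℝ)
    (h1 : a * b - p * q - (c ^ 2 - r ^ 2) = 1)
    (h2 : a * q + p * b - 2 * (c * r) = 0)
    (h3 : a * b + p * q - (c ^ 2 + r ^ 2) = 1) :
    p = 0 ∧ q = 0 ∧ r = 0 := by
  have hab : a * b - c ^ 2 = 1 := by linarith
  have hpq : p * q = r ^ 2 := by linarith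
  have key : (a * q - p * b) ^ 2 + 4 * r ^ 2 = 0 := by
    linear_combination (a*q + p*b + 2*(c*r)) * h2 - (4*r^2) * hab - (4*(a*b)) * hpq
  have hr2 : r ^ 2 = 0 := le_antisymm (by nlinarith [sq_nonneg (a*q - p*b)]) (sq_nonneg r)
  have hr : r = 0 := sq_eq_zero_iff.mp hr2
  have hd2 : (a * q - p * b) ^ 2 = 0 := by linarith
  have hd : a * q - p * b = 0 := sq_eq_zero_iff.mp hd2
  have haq : a * q = 0 := by
    have := h2; rw [hr] at this; linarith
  have hpb : p * b = 0 := by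
    have := h2; rw [hr] at this; linarith
  have hq : q = 0 := by
    have h : q * (1 + c ^ 2) = 0 := by linear_combination b * haq - q * hab
    have hpos : (0:ℝ) < 1 + c ^ 2 := by positivity
    exact (mul_eq_zero.mp h).resolve_right (ne_of_gt hpos)
  have hp : p = 0 := by
    have h : p * (1 + c ^ 2) = 0 := by linear_combination a * hpb - p * hab
    have hpos : (0:ℝ) < 1 + c ^ 2 := by positivity
    exact (mul_eq_zero.mp h).resolve_right (ne_of_gt hpos)
  exact ⟨hp, hq, hr⟩

/-- A complex symmetric 2×2 matrix `z` satisfies `Q(z) = 1` and `H(z) = 1` iff all its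
entries are real and `det z = 1`; i.e. `M_{1,1}` is the real hyperboloid of two sheets. -/
theorem M11_eq_real_hyperboloid (z : Matrix (Fin 2) (Fin 2) ℂ) (hsym : z 0 1 = z 1 0) :
    (z 0 0 * z 1 1 - (z 0 1) ^ 2 = 1 ∧
      (z 0 0 * starRingEnd ℂ (z 1 1)).re - ‖z 0 1‖ ^ 2 = 1) ↔
    ((∀ i j, (z i j).im = 0) ∧ z 0 0 * z 1 1 - (z 0 1) ^ 2 = 1) := by
  have hnorm : ‖z 0 1‖ ^ 2 = (z 0 1).re ^ 2 + (z 0 1).im ^ 2 := by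
    rw [Complex.sq_norm, Complex.normSq_apply]; ring
  constructor
  · rintro ⟨h1, h2⟩
    refine ⟨?_, h1⟩
    have e1 := congrArg Complex.re h1
    have e2 := congrArg Complex.im h1
    simp [Complex.mul_re, Complex.mul_im, pow_two] at e1 e2
    rw [hnorm] at h2
    simp [Complex.mul_re] at h2
    obtain ⟨hp, hq, hr⟩ := aux_real (z 0 0).re (z 1 1).re (z 0 1).re
      (z 0 0).im (z 1 1).im (z 0 1).im (by linarith [e1]) (by linarith [e2])
      (by linarith [h2])
    intro i j
    fin_cases i <;> fin_cases j <;> simp_all [← hsym]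
  · rintro ⟨him, h1⟩
    refine ⟨h1, ?_⟩
    have e1 := congrArg Complex.re h1
    simp [Complex.mul_re, pow_two, him] at e1
    rw [hnorm]
    simp [Complex.mul_re, him]
    linarith [e1]
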